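/- For all positive integers a, b, n, A(a,b,n) = A(b,a,n). -/

import Mathlib

open Finset

lemma bnot_eq_iff (x c : Bool) : ((!x) = c) ↔ (x = !c) := by
  cases x <;> cases c <;> decide

lemma count_rev_flip (L L' m : ℕ) (hLL : L' = L) (hm : m ≤ L) (w : Fin L → Bool) (c : Bool) :
    (univ.filter fun i : Fin L' => i.val < m ∧ w ((Fin.cast hLL i).rev) = c).card
      + (univ.filter fun j : Fin L => j.val < L - m ∧ w j = c).card
    = (univ.filter fun j : Fin L => w j = c).card := by
  have h1 : (univ.filter fun i : Fin L' => i.val < m ∧ w ((Fin.cast hLL i).rev) = c).card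
      = (univ.filter fun j : Fin L => L - m ≤ j.val ∧ w j = c).card := by
    apply Finset.card_nbij (fun i => (Fin.cast hLL i).rev)
    · intro i hi
      simp only [Finset.mem_coe, mem_filter, mem_univ, true_and] at hi ⊢
      refine ⟨?_, hi.2⟩
      have h := i.isLt
      simp only [Fin.val_rev, Fin.coe_cast]
      omega
    · intro x _ y _ hxy
      have h := congrArg Fin.val hxy
      simp only [Fin.val_rev, Fin.coe_cast] at h
      have hx := x.isLt
      have hy := y.isLt
      exact Fin.ext (by omega)
    · intro j hj
      simp only [coe_filter, Set.mem_setOf_eq, mem_univ, true_and] at hj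
      have hjL := j.isLt
      refine ⟨Fin.cast hLL.symm j.rev, ?_, ?_⟩
      · simp only [coe_filter, Set.mem_setOf_eq, mem_univ, true_and,
          Fin.coe_cast, Fin.val_rev]
        constructor
        · omega
        · have he : (Fin.cast hLL (Fin.cast hLL.symm j.rev)).rev = j := by
            apply Fin.ext; simp [Fin.val_rev]
          rw [he]; exact hj.2
      · apply Fin.ext; simp [Fin.val_rev]
  rw [h1]
  have h2 := Finset.card_filter_add_card_filter_not
    (s := univ.filter (fun j : Fin L => w j = c)) (p := fun j : Fin L => j.val < L - m)
  simp only [Finset.filter_filter, not_lt] at h2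
  have e1 : (univ.filter fun j : Fin L => j.val < L - m ∧ w j = c)
      = (univ.filter fun j : Fin L => w j = c ∧ j.val < L - m) := by
    apply Finset.filter_congr; intro j _; exact and_comm
  have e2 : (univ.filter fun j : Fin L => L - m ≤ j.val ∧ w j = c)
      = (univ.filter fun j : Fin L => w j = c ∧ L - m ≤ j.val) := by
    apply Finset.filter_congr; intro j _; exact and_comm
  rw [e1, e2]
  omega

lemma total_count (L : ℕ) (w : Fin L → Bool) :
    (univ.filter fun j : Fin L => w j = true).card
      + (univ.filter fun j : Fin L => w j = false).card = L := by
  have h := Finset.card_filter_add_card_filter_not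
    (s := (univ : Finset (Fin L))) (p := fun j : Fin L => w j = true)
  simpa [Bool.not_eq_true] using h

lemma step_lemma (a b n : ℕ) (w : Fin ((a + b) * n) → Bool)
    (h1 : (univ.filter (fun i => w i = true)).card = a * n)
    (h2 : ∀ m : ℕ, m ≤ (a + b) * n →
      b * (univ.filter (fun i : Fin ((a + b) * n) => i.val < m ∧ w i = true)).card
        ≤ a * (univ.filter (fun i : Fin ((a + b) * n) => i.val < m ∧ w i = false)).card) :
    (univ.filter (fun i : Fin ((b + a) * n) =>
        (!(w ((Fin.cast (by ring : (b + a) * n = (a + b) * n) i).rev))) = true)).card = b * n ∧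
    ∀ m : ℕ, m ≤ (b + a) * n →
      a * (univ.filter (fun i : Fin ((b + a) * n) => i.val < m ∧
            (!(w ((Fin.cast (by ring : (b + a) * n = (a + b) * n) i).rev))) = true)).card
        ≤ b * (univ.filter (fun i : Fin ((b + a) * n) => i.val < m ∧
            (!(w ((Fin.cast (by ring : (b + a) * n = (a + b) * n) i).rev))) = false)).card := by
  have hLL : (b + a) * n = (a + b) * n := by ring
  have htot := total_count ((a + b) * n) w
  have hfalse : (univ.filter fun j : Fin ((a + b) * n) => w j = false).card = b * n := by
    have hd : (a + b) * n = a * n + b * n := by ring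
    omega
  simp only [bnot_eq_iff, Bool.not_true, Bool.not_false]
  constructor
  · have hc := count_rev_flip ((a + b) * n) ((b + a) * n) ((a + b) * n)
      hLL (le_refl _) w false
    simp only [Nat.sub_self, Nat.not_lt_zero, false_and, Finset.filter_false,
      Finset.card_empty, add_zero] at hc
    have he : (univ.filter fun i : Fin ((b + a) * n) =>
          i.val < (a + b) * n ∧ w ((Fin.cast hLL i).rev) = false)
        = (univ.filter fun i : Fin ((b + a) * n) => w ((Fin.cast hLL i).rev) = false) := by
      apply Finset.filter_congr
      intro i _
      have := i.isLt
      constructor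
      · exact fun h => h.2
      · exact fun h => ⟨by omega, h⟩
    rw [he] at hc
    rw [hc, hfalse]
  · intro m hm
    have hm' : m ≤ (a + b) * n := by omega
    have hT := count_rev_flip ((a + b) * n) ((b + a) * n) m hLL hm' w false
    have hF := count_rev_flip ((a + b) * n) ((b + a) * n) m hLL hm' w true
    rw [hfalse] at hT
    rw [h1] at hF
    have hk := h2 ((a + b) * n - m) (by omega)
    set X := (univ.filter fun i : Fin ((b + a) * n) => i.val < m ∧
        w ((Fin.cast hLL i).rev) = false).card with hX
    set Y := (univ.filter fun i : Fin ((b + a) * n) => i.val < m ∧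
        w ((Fin.cast hLL i).rev) = true).card with hY
    set T := (univ.filter fun j : Fin ((a + b) * n) =>
        j.val < (a + b) * n - m ∧ w j = true).card with hTt
    set F := (univ.filter fun j : Fin ((a + b) * n) =>
        j.val < (a + b) * n - m ∧ w j = false).card with hFt
    -- hT : X + F = b * n, hF : Y + T = a * n, hk : b * T ≤ a * F, goal : a * X ≤ b * Y
    have e1 : a * X + a * F = a * (b * n) := by rw [← Nat.mul_add, hT]
    have e2 : b * Y + b * T = b * (a * n) := by rw [← Nat.mul_add, hF]
    have key : a * (b * n) = b * (a * n) := by ring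
    linarith

open Classical in
/-- `A a b n` is the number of lattice paths from `(0,0)` to `(bn, an)` using unit East and
North steps that stay on or below the line `y = (a/b)x`, i.e. every lattice point `(x,y)`
visited satisfies `b·y ≤ a·x`.  A path is encoded as a word `w : Fin ((a+b)*n) → Bool`,
where `true` denotes a North step and `false` an East step; the point visited after `m`
steps has `y` = number of North steps and `x` = number of East steps among the first `m`. -/
noncomputable def ratPaths (a b n : ℕ) : ℕ :=
  ((Finset.univ : Finset (Fin ((a + b) * n) → Bool)).filter (fun w =>
      (Finset.univ.filter (fun i => w i = true)).card = a * n ∧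
      ∀ m : ℕ, m ≤ (a + b) * n →
        b * (Finset.univ.filter (fun i : Fin ((a + b) * n) => i.val < m ∧ w i = true)).card
          ≤ a * (Finset.univ.filter
              (fun i : Fin ((a + b) * n) => i.val < m ∧ w i = false)).card)).card


/-- `A(a,b,n) = A(b,a,n)` for all positive integers `a, b, n`. -/
theorem ratPaths_symm (a b n : ℕ) (ha : 0 < a) (hb : 0 < b) (hn : 0 < n) :
    ratPaths a b n = ratPaths b a n := by
  classical
  unfold ratPaths
  apply Finset.card_bij'
    (fun w _ => fun i : Fin ((b + a) * n) =>
      !(w ((Fin.cast (by ring : (b + a) * n = (a + b) * n) i).rev)))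
    (fun v _ => fun i : Fin ((a + b) * n) =>
      !(v ((Fin.cast (by ring : (a + b) * n = (b + a) * n) i).rev)))
  · intro w _
    funext i
    simp only [Bool.not_not]
    congr 1
    apply Fin.ext
    have h1 : (b + a) * n = (a + b) * n := by ring
    have h2 := i.isLt
    simp only [Fin.val_rev, Fin.coe_cast]
    omega
  · intro v _
    funext i
    simp only [Bool.not_not]
    congr 1
    apply Fin.ext
    have h1 : (b + a) * n = (a + b) * n := by ring
    have h2 := i.isLt
    simp only [Fin.val_rev, Fin.coe_cast]
    omega
  · intro w hw
    simp only [mem_filter, mem_univ, true_and] at hw ⊢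
    exact step_lemma a b n w hw.1 hw.2
  · intro v hv
    simp only [mem_filter, mem_univ, true_and] at hv ⊢
    exact step_lemma b a n v hv.1 hv.2
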